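/- Let x > 0 and y > 0 be real numbers and let D, D̄, S, S̄, P, P̄ be nonnegative real numbers satisfying the system: D = y + S + P; D̄ = y + S̄ + P̄; S = (y+P)·x·D; S̄ = (y+P)·x·D̄ + (y+P̄)·x·D; P = y·(e^{S̄}−1) + y·S·e^{S̄} + S·(e^{S̄}−1); P̄ = (e^{S̄} − S̄ − 1) + y·(e^{S̄}−1). Then D satisfies the implicit equation D = (y + (1+y)·x·D²/(1+x·D)) · exp( −x·D·(y(1+xD) − (1+y)D)·(2+xD) / ((y(1+xD) + (1+y)xD²)·(1+xD)²) ). -/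
import Mathlib


theorem network_system_implies_implicit_equation
    (x y D Db S Sb P Pb : ℝ)
    (hx : 0 < x) (hy : 0 < y)
    (hD : 0 ≤ D) (hDb : 0 ≤ Db) (hS : 0 ≤ S) (hSb : 0 ≤ Sb) (hP : 0 ≤ P) (hPb : 0 ≤ Pb)
    (e1 : D = y + S + P)
    (e2 : Db = y + Sb + Pb)
    (e3 : S = (y + P) * x * D)
    (e4 : Sb = (y + P) * x * Db + (y + Pb) * x * D)
    (e5 : P = y * (Real.exp Sb - 1) + y * S * Real.exp Sb + S * (Real.exp Sb - 1))
    (e6 : Pb = (Real.exp Sb - Sb - 1) + y * (Real.exp Sb - 1)) :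
    D = (y + (1 + y) * x * D ^ 2 / (1 + x * D)) *
        Real.exp (-(x * D * ((y * (1 + x * D) - (1 + y) * D) * (2 + x * D)) /
          ((y * (1 + x * D) + (1 + y) * x * D ^ 2) * (1 + x * D) ^ 2))) := by
  obtain ⟨E, hE⟩ : ∃ E, Real.exp Sb = E := ⟨_, rfl⟩
  rw [hE] at e5 e6
  have hc : (0:ℝ) < 1 + x * D := by nlinarith
  have hA : (0:ℝ) < y * (1 + x * D) + (1 + y) * x * D ^ 2 := by
    nlinarith [mul_pos hy hc, mul_nonneg hx.le (sq_nonneg D), mul_nonneg hy.le (mul_nonneg hx.le (sq_nonneg D))]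
  have F1 : D = (y + S * (1 + y)) * E := by linear_combination e1 + e5
  have F2 : S * (1 + x * D) = x * D ^ 2 := by linear_combination e3 - x * D * e1
  have F3 : Db = (1 + y) * E - 1 := by linear_combination e2 + e6
  have F4a : Sb * (1 + x * D) = x * Db * (D - S) + x * D * Db := by
    linear_combination e4 - x * Db * e1 - x * D * e2
  have F4 : Sb * (1 + x * D) ^ 2 = x * D * Db * (2 + x * D) := by
    linear_combination (1 + x * D) * F4a - x * Db * F2
  have F5 : D * (1 + x * D) = (y * (1 + x * D) + (1 + y) * x * D ^ 2) * E := by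
    linear_combination (1 + x * D) * F1 + (1 + y) * E * F2
  have F6 : Db * (y * (1 + x * D) + (1 + y) * x * D ^ 2)
      = (1 + y) * D * (1 + x * D) - (y * (1 + x * D) + (1 + y) * x * D ^ 2) := by
    linear_combination (y * (1 + x * D) + (1 + y) * x * D ^ 2) * F3 - (1 + y) * F5
  have hexp : -(x * D * ((y * (1 + x * D) - (1 + y) * D) * (2 + x * D)) /
      ((y * (1 + x * D) + (1 + y) * x * D ^ 2) * (1 + x * D) ^ 2)) = Sb := by
    field_simp
    linear_combination -((y * (1 + x * D) + (1 + y) * x * D ^ 2) * F4) - x * D * (2 + x * D) * F6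
  rw [hexp, hE]
  field_simp
  linear_combination F5
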